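/- Let R ⊆ S be a birational extension of reduced commutative Noetherian rings, let C be a finitely generated torsion-free S-module, let M be a finitely generated torsion-free R-module, and let f : C → M be an R-linear map. Then the image of f is an S-submodule of M ⊗_R K, where K is the total quotient ring of R. -/
import Mathlib


set_option synthInstance.maxHeartbeats 1000000
set_option maxHeartbeats 1000000

universe u

/-- Torsion-free: nonzerodivisors act injectively; equivalently the natural map
`M → M ⊗ K` to the extension by the total quotient ring is injective. -/
def TorsionFree (A : Type u) [CommRing A] (M : Type u) [AddCommGroup M] [Module A M] : Prop :=
  ∀ a ∈ nonZeroDivisors A, ∀ m : M, a • m = 0 → m = 0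

/-- Let `R ⊆ S` be a birational extension of reduced Noetherian rings,
`C` a finitely generated torsion-free `S`-module, `M` a finitely generated torsion-free
`R`-module and `f : C → M` an `R`-linear map.  Then the image of `f`, viewed inside
`K ⊗_R M` via the natural (injective) map `M → K ⊗_R M`, is stable under multiplication
by elements of `S`; i.e. it is an `S`-submodule of `M ⊗_R K`. -/
theorem image_is_S_module_of_birational
    (R : Type u) [CommRing R] [IsNoetherianRing R] [IsReduced R]
    (S : Subalgebra R (FractionRing R)) (hSfg : Module.Finite R S)
    (C : Type u) [AddCommGroup C] [Module R C] [Module S C] [IsScalarTower R S C]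
    (hC : Module.Finite S C) (hCt : TorsionFree S C)
    (M : Type u) [AddCommGroup M] [Module R M]
    (hM : Module.Finite R M) (hMt : TorsionFree R M)
    (f : C →ₗ[R] M) (s : S) (c : C) :
    ∃ c' : C,
      (s : FractionRing R) • (TensorProduct.mk R (FractionRing R) M 1 (f c)) =
        TensorProduct.mk R (FractionRing R) M 1 (f c') := by
  refine ⟨s • c, ?_⟩
  set K := FractionRing R
  obtain ⟨⟨r, b⟩, hrb⟩ := IsLocalization.surj (nonZeroDivisors R) (s : K)
  have hbu : IsUnit (algebraMap R K b) := IsLocalization.map_units K b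
  apply hbu.smul_left_cancel.mp
  have hbs : (b : R) • s = algebraMap R S r := by
    apply Subtype.ext
    simpa [Algebra.smul_def, mul_comm] using hrb
  calc (algebraMap R K b) • (s : K) • (TensorProduct.mk R K M 1 (f c))
      = ((algebraMap R K b) * (s : K)) • (TensorProduct.mk R K M 1 (f c)) := by
        rw [smul_smul]
    _ = (algebraMap R K r) • (TensorProduct.mk R K M 1 (f c)) := by
        rw [mul_comm, hrb]
    _ = (r : R) • (TensorProduct.mk R K M 1 (f c)) := algebraMap_smul K r _
    _ = TensorProduct.mk R K M 1 (r • f c) := by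
        simp [TensorProduct.mk_apply, TensorProduct.tmul_smul]
    _ = TensorProduct.mk R K M 1 ((b : R) • f (s • c)) := by
        have h2 : (b : R) • f (s • c) = f (r • c) := by
          rw [← f.map_smul, ← smul_assoc, hbs, algebraMap_smul]
        rw [h2, f.map_smul]
    _ = (b : R) • TensorProduct.mk R K M 1 (f (s • c)) := by
        simp [TensorProduct.mk_apply, TensorProduct.tmul_smul]
    _ = (algebraMap R K b) • TensorProduct.mk R K M 1 (f (s • c)) :=
        (algebraMap_smul K (b : R) _).symm
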